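/- Converse direction of linear BC equivalence: Suppose φ : S×A → R^d, ρ ∈ R^d, and M ∈ R^{d×d} with spectral norm ||M||₂ < 1 satisfy E_ν[||Mφ(s,a) − γE_{s'∼P(s,a)}[φ(s',π)]||²₂ + (ρᵀφ(s,a) − r(s,a))²] = 0. Then for any W ≥ ||ρ||₂/(1 − ||M||₂), φ is exactly linear Bellman complete at radius W: for every w₁ ∈ B_W there exists w₂ ∈ B_W (namely w₂ = ρ + Mᵀw₁) with E_ν[(w₂ᵀφ(s,a) − r(s,a) − γE_{s'∼P(s,a)}[w₁ᵀφ(s',π)])²] = 0. -/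

import Mathlib

open Finset

theorem linear_model_implies_linear_bc
    (d : ℕ) (Ω : Type) [Fintype Ω]
    (ν : Ω → ℝ) (φ nxt : Ω → EuclideanSpace ℝ (Fin d)) (r : Ω → ℝ)
    (γ : ℝ) (hγ0 : 0 ≤ γ) (hγ1 : γ < 1)
    (hν0 : ∀ ω, 0 ≤ ν ω) (hν1 : ∑ ω, ν ω = 1)
    (ρ : EuclideanSpace ℝ (Fin d))
    (M : EuclideanSpace ℝ (Fin d) →L[ℝ] EuclideanSpace ℝ (Fin d))
    (hM : ‖M‖ < 1)
    (hzero : ∑ ω, ν ω *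
      (‖M (φ ω) - γ • nxt ω‖ ^ 2 + ((inner ℝ ρ (φ ω) : ℝ) - r ω) ^ 2) = 0) :
    ∀ W : ℝ, ‖ρ‖ / (1 - ‖M‖) ≤ W →
      ∀ w₁ : EuclideanSpace ℝ (Fin d), ‖w₁‖ ≤ W →
        ∃ w₂ : EuclideanSpace ℝ (Fin d), ‖w₂‖ ≤ W ∧
          ∑ ω, ν ω *
            ((inner ℝ w₂ (φ ω) : ℝ) - r ω - γ * (inner ℝ w₁ (nxt ω) : ℝ)) ^ 2 = 0 := by
  intro W hW w₁ hw₁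
  have hM1 : 0 < 1 - ‖M‖ := by linarith
  have hMnn : (0:ℝ) ≤ ‖M‖ := norm_nonneg _
  have hW0 : 0 ≤ W := le_trans (div_nonneg (norm_nonneg _) hM1.le) hW
  refine ⟨ρ + ContinuousLinearMap.adjoint M w₁, ?_, ?_⟩
  · have h1 : ‖ρ + ContinuousLinearMap.adjoint M w₁‖ ≤ ‖ρ‖ + ‖M‖ * ‖w₁‖ := by
      refine le_trans (norm_add_le _ _) ?_
      have h2 := (ContinuousLinearMap.adjoint M).le_opNorm w₁
      have h3 : ‖ContinuousLinearMap.adjoint M‖ = ‖M‖ :=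
        LinearIsometryEquiv.norm_map _ M
      rw [h3] at h2
      linarith
    have hρ : ‖ρ‖ ≤ (1 - ‖M‖) * W := by
      rw [div_le_iff₀ hM1] at hW; linarith [hW]
    have : ‖M‖ * ‖w₁‖ ≤ ‖M‖ * W := mul_le_mul_of_nonneg_left hw₁ hMnn
    nlinarith
  · -- each term of hzero is zero
    have hterm : ∀ ω ∈ Finset.univ, ν ω *
        (‖M (φ ω) - γ • nxt ω‖ ^ 2 + ((inner ℝ ρ (φ ω) : ℝ) - r ω) ^ 2) = 0 := by
      rw [← Finset.sum_eq_zero_iff_of_nonneg]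
      · exact hzero
      · intro ω _
        exact mul_nonneg (hν0 ω) (by positivity)
    refine Finset.sum_eq_zero ?_
    intro ω _
    rcases mul_eq_zero.mp (hterm ω (Finset.mem_univ ω)) with h | h
    · rw [h, zero_mul]
    · have h1 : ‖M (φ ω) - γ • nxt ω‖ ^ 2 = 0 ∧ ((inner ℝ ρ (φ ω) : ℝ) - r ω) ^ 2 = 0 := by
        constructor <;> nlinarith [sq_nonneg ‖M (φ ω) - γ • nxt ω‖,
          sq_nonneg ((inner ℝ ρ (φ ω) : ℝ) - r ω)]
      have hMφ : M (φ ω) = γ • nxt ω := by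
        have := pow_eq_zero_iff (n := 2) (by norm_num) |>.mp h1.1
        have := norm_eq_zero.mp this
        exact sub_eq_zero.mp this
      have hr : (inner ℝ ρ (φ ω) : ℝ) = r ω := by
        have := pow_eq_zero_iff (n := 2) (by norm_num) |>.mp h1.2
        linarith [sub_eq_zero.mp this]
      have hadj : (inner ℝ (ContinuousLinearMap.adjoint M w₁) (φ ω) : ℝ)
          = γ * (inner ℝ w₁ (nxt ω) : ℝ) := by
        rw [ContinuousLinearMap.adjoint_inner_left, hMφ, inner_smul_right]
      rw [inner_add_left, hadj, hr]
      ring_nf
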